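/- Let V be a real vector space, B : V × V → ℝ a bilinear form with B(v,v) ≥ 0 for all v ∈ V, and ℓ : V → ℝ a linear functional. Suppose u, ũ ∈ V satisfy B(u,f) = ℓ(f) and B(f,ũ) = ℓ(f) for all f ∈ V, and that ℓ(u) > 0. Then, with the infimum and supremum taken in the extended real numbers, ⨅_{f ∈ V, ℓ(f)=1} ⨆_{g ∈ V, ℓ(g)=0} B(f+g, f−g) = 1/ℓ(u). -/

import Mathlib

/-- Abstract core of Theorem 2.2: the saddle-point variational formula
`⨅_{ℓ f = 1} ⨆_{ℓ g = 0} B(f+g, f-g) = 1/ℓ(u)` for a nonnegative bilinear form `B`,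
where `u`, `ut` are the potential and dual potential: `B(u,·) = ℓ = B(·,ut)`. -/
theorem stmt0 {V : Type*} [AddCommGroup V] [Module ℝ V]
    (B : V →ₗ[ℝ] V →ₗ[ℝ] ℝ) (hBnonneg : ∀ v : V, 0 ≤ B v v)
    (ℓ : V →ₗ[ℝ] ℝ) (u ut : V)
    (hu : ∀ f : V, B u f = ℓ f) (hut : ∀ f : V, B f ut = ℓ f)
    (hpos : 0 < ℓ u) :
    (⨅ f : {f : V // ℓ f = 1}, ⨆ g : {g : V // ℓ g = 0},
        ((B (f.1 + g.1) (f.1 - g.1) : ℝ) : EReal))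
      = ((1 / ℓ u : ℝ) : EReal) := by
  set α : ℝ := ℓ u with hαdef
  have hα : α ≠ 0 := ne_of_gt hpos
  have hBuu : B u u = α := hu u
  have hBuut : B u ut = α := hut u
  have hℓut : ℓ ut = α := by rw [← hu ut, hut u]
  have hButut : B ut ut = α := by rw [hut ut, hℓut]
  set w : V := (2*α)⁻¹ • (u + ut) with hwdef
  have hℓw : ℓ w = 1 := by
    rw [hwdef]
    simp only [map_smul, map_add, hℓut, smul_eq_mul, ← hαdef]
    field_simp
    ring
  apply le_antisymm
  · refine le_trans (iInf_le _ ⟨w, hℓw⟩) ?_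
    refine iSup_le fun g => ?_
    rw [EReal.coe_le_coe_iff]
    have hg0 : ℓ g.1 = 0 := g.2
    set d : V := (2*α)⁻¹ • (u - ut) with hddef
    have h1 : B u g.1 = 0 := by rw [hu]; exact hg0
    have h2 : B g.1 ut = 0 := by rw [hut]; exact hg0
    have key : B (w + g.1) (w - g.1) = 1/α - B (g.1 - d) (g.1 - d) := by
      simp only [hwdef, hddef, map_add, map_sub, map_smul, LinearMap.add_apply,
        LinearMap.sub_apply, LinearMap.smul_apply, smul_eq_mul,
        hBuu, hBuut, hButut, h1, h2]
      field_simp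
      ring
    rw [key]
    have := hBnonneg (g.1 - d)
    linarith
  · refine le_iInf fun f => ?_
    have hf1 : ℓ f.1 = 1 := f.2
    set gw : V := f.1 - α⁻¹ • ut with hgdef
    have hgw : ℓ gw = 0 := by
      rw [hgdef]
      simp only [map_sub, map_smul, hf1, hℓut, smul_eq_mul]
      field_simp
      norm_num
    refine le_trans ?_ (le_iSup _ (⟨gw, hgw⟩ : {g : V // ℓ g = 0}))
    have hsub : f.1 - gw = α⁻¹ • ut := by rw [hgdef]; abel
    have hval : B (f.1 + gw) (f.1 - gw) = 1/α := by
      rw [hsub, map_smul, smul_eq_mul, hut, map_add, hf1, hgw]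
      field_simp
      norm_num
    rw [hval]
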